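/- Every cycle graph C_n with n ≥ 3 satisfies pmd(C_n) = 3. -/

import Mathlib

open SimpleGraph

variable {V : Type*}

/-- A positive matching in a simple graph: a set `M` of pairwise disjoint edges of `G` together
with a vertex weighting `w` such that an edge `uv` of `G` satisfies `w u + w v > 0` iff the edge
belongs to `M`. -/
def IsPositiveMatching (G : SimpleGraph V) (M : Set (Sym2 V)) : Prop :=
  M ⊆ G.edgeSet ∧
  (∀ e ∈ M, ∀ f ∈ M, e ≠ f → ∀ v : V, v ∈ e → v ∉ f) ∧
  ∃ w : V → ℝ, ∀ u v : V, G.Adj u v → (0 < w u + w v ↔ s(u, v) ∈ M)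

/-- A positive matching decomposition of `G` with parts `E 0, …, E (p-1)`: an ordered partition
of the edge set of `G` such that each part is a positive matching of `G` minus the earlier
parts. -/
def IsPMD (G : SimpleGraph V) {p : ℕ} (E : Fin p → Set (Sym2 V)) : Prop :=
  (∀ i j : Fin p, i ≠ j → Disjoint (E i) (E j)) ∧
  (⋃ i, E i) = G.edgeSet ∧
  ∀ i : Fin p, IsPositiveMatching (G.deleteEdges (⋃ j : Fin p, ⋃ (_ : j < i), E j)) (E i)

/-- The minimum number of parts in a positive matching decomposition of `G`. -/
noncomputable def pmd (G : SimpleGraph V) : ℕ :=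
  sInf {p : ℕ | ∃ E : Fin p → Set (Sym2 V), IsPMD G E}

namespace PmdCycleAux

variable {n : ℕ} [NeZero n]

/-- The edge from `i` to `i + 1` in the cycle graph. -/
def ec (n : ℕ) [NeZero n] (i : Fin n) : Sym2 (Fin n) := s(i, i + 1)

lemma val_one (hn : 3 ≤ n) : (1 : Fin n).val = 1 := by
  rw [Fin.val_one']; exact Nat.mod_eq_of_lt (by omega)

lemma val_two (hn : 3 ≤ n) : (2 : Fin n).val = 2 := by
  have : (2 : Fin n).val = 2 % n := rfl
  simpa [Nat.mod_eq_of_lt (show 2 < n by omega)] using this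

lemma add_one_val (hn : 3 ≤ n) (i : Fin n) :
    (i + 1).val = if i.val + 1 = n then 0 else i.val + 1 := by
  have h1 : (i + 1).val = (i.val + 1) % n := by
    rw [Fin.val_add, val_one hn]
  have hi := i.isLt
  rcases eq_or_ne (i.val + 1) n with h | h
  · rw [h1, h]; simp [h]
  · rw [h1, Nat.mod_eq_of_lt (by omega), if_neg h]

lemma ec_inj (hn : 3 ≤ n) {i j : Fin n} (h : ec n i = ec n j) : i = j := by
  rw [ec, ec, Sym2.eq_iff] at h
  rcases h with ⟨h1, _⟩ | ⟨h1, h2⟩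
  · exact h1
  · exfalso
    have h3 : i + 1 + 1 = i := by rw [h2, ← h1]
    have h2' : (2 : Fin n) = 0 := by
      have := congrArg (· - i) h3
      simp only [add_assoc, one_add_one_eq_two, sub_self] at this
      rw [add_comm, add_sub_cancel_right] at this
      rw [← this]; exact Fin.ext (by rw [Fin.val_add, val_one hn, val_two hn]; exact (Nat.mod_eq_of_lt (by omega)).symm)
    have := congrArg Fin.val h2'
    rw [val_two hn] at this
    simp at this

lemma adj_iff (hn : 3 ≤ n) {u v : Fin n} :
    (cycleGraph n).Adj u v ↔ v = u + 1 ∨ u = v + 1 := by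
  rw [cycleGraph_adj']
  constructor
  · rintro (h | h)
    · right
      have : u - v = 1 := Fin.ext (by rw [h, val_one hn])
      rw [← this]; rw [add_comm, sub_add_cancel]
    · left
      have : v - u = 1 := Fin.ext (by rw [h, val_one hn])
      rw [← this]; rw [add_comm, sub_add_cancel]
  · rintro (h | h)
    · right; rw [h, add_sub_cancel_left, val_one hn]
    · left; rw [h, add_sub_cancel_left, val_one hn]

lemma adj_succ (hn : 3 ≤ n) (i : Fin n) : (cycleGraph n).Adj i (i + 1) :=
  (adj_iff hn).2 (Or.inl rfl)

lemma mem_edgeSet_iff (hn : 3 ≤ n) {x : Sym2 (Fin n)} :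
    x ∈ (cycleGraph n).edgeSet ↔ ∃ i, x = ec n i := by
  constructor
  · intro hx
    induction x using Sym2.inductionOn with
    | hf u v =>
      rw [mem_edgeSet, adj_iff hn] at hx
      rcases hx with h | h
      · exact ⟨u, by rw [ec, h]⟩
      · exact ⟨v, by rw [ec, h, Sym2.eq_swap]⟩
  · rintro ⟨i, rfl⟩
    exact adj_succ hn i

/-- index condition for the three parts of the decomposition -/
def cond (n t k : ℕ) : Prop :=
  if t = 0 then Even k ∧ k + 2 < n
  else if t = 1 then Odd k
  else Even k ∧ n ≤ k + 2

/-- The three parts of the positive matching decomposition of the cycle. -/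
def Epart (n : ℕ) [NeZero n] (t : Fin 3) : Set (Sym2 (Fin n)) :=
  {x | ∃ i : Fin n, x = ec n i ∧ cond n t.val i.val}

lemma mem_Epart (hn : 3 ≤ n) {t : Fin 3} {u : Fin n} :
    ec n u ∈ Epart n t ↔ cond n t.val u.val := by
  constructor
  · rintro ⟨i, hi, hc⟩
    rwa [ec_inj hn hi]
  · exact fun hc => ⟨u, rfl, hc⟩

lemma mem_ec_iff (hn : 3 ≤ n) {v i : Fin n} : v ∈ ec n i ↔ v = i ∨ v = i + 1 := by
  rw [ec, Sym2.mem_iff]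

/-- A generic matching criterion. -/
lemma matching_of (hn : 3 ≤ n) (P : ℕ → Prop)
    (h : ∀ i j : Fin n, P i.val → P j.val → i ≠ j → i ≠ j + 1 ∧ j ≠ i + 1) :
    ∀ e ∈ {x | ∃ i : Fin n, x = ec n i ∧ P i.val},
      ∀ f ∈ {x | ∃ i : Fin n, x = ec n i ∧ P i.val},
        e ≠ f → ∀ v : Fin n, v ∈ e → v ∉ f := by
  rintro e ⟨i, rfl, hi⟩ f ⟨j, rfl, hj⟩ hne v hv hv'
  have hij : i ≠ j := fun h' => hne (by rw [h'])
  obtain ⟨h1, h2⟩ := h i j hi hj hij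
  rw [mem_ec_iff hn] at hv hv'
  rcases hv with rfl | rfl <;> rcases hv' with h3 | h3
  · exact hij h3
  · exact h1 h3
  · exact h2 h3.symm
  · exact hij (add_right_cancel h3)

/-- val-level criterion suffices -/
lemma matching_of' (hn : 3 ≤ n) (P : ℕ → Prop)
    (h : ∀ k l : ℕ, k < n → l < n → P k → P l →
        (k = if l + 1 = n then 0 else l + 1) → False) :
    ∀ e ∈ {x | ∃ i : Fin n, x = ec n i ∧ P i.val},
      ∀ f ∈ {x | ∃ i : Fin n, x = ec n i ∧ P i.val},
        e ≠ f → ∀ v : Fin n, v ∈ e → v ∉ f := by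
  apply matching_of hn
  intro i j hi hj hij
  constructor
  · intro he
    exact h i.val j.val i.isLt j.isLt hi hj (by rw [he, add_one_val hn])
  · intro he
    exact h j.val i.val j.isLt i.isLt hj hi (by rw [he, add_one_val hn])

lemma Epart_matching (hn : 3 ≤ n) (t : Fin 3) :
    ∀ e ∈ Epart n t, ∀ f ∈ Epart n t, e ≠ f → ∀ v : Fin n, v ∈ e → v ∉ f := by
  apply matching_of' hn
  intro k l hk hl hck hcl heq
  simp only [cond, Nat.even_iff, Nat.odd_iff] at hck hcl
  fin_cases t <;> simp only [Fin.isValue, Fin.val_zero, Fin.val_one, Fin.val_two] at hck hcl <;>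
    norm_num at hck hcl <;> split at heq <;> omega

lemma Epart_disjoint (hn : 3 ≤ n) (t s : Fin 3) (hts : t ≠ s) :
    Disjoint (Epart n t) (Epart n s) := by
  rw [Set.disjoint_left]
  rintro x ⟨i, rfl, hi⟩ ⟨j, hj, hcj⟩
  obtain rfl := ec_inj hn hj
  simp only [cond, Nat.even_iff, Nat.odd_iff] at hi hcj
  have hts' : t.val ≠ s.val := fun h => hts (Fin.ext h)
  have ht := t.isLt; have hs := s.isLt
  have ht3 : t.val = 0 ∨ t.val = 1 ∨ t.val = 2 := by omega
  have hs3 : s.val = 0 ∨ s.val = 1 ∨ s.val = 2 := by omega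
  rcases ht3 with h1|h1|h1 <;> rcases hs3 with h2|h2|h2 <;>
      rw [h1] at hi <;> rw [h2] at hcj <;> norm_num at hi hcj <;> omega

lemma Epart_union (hn : 3 ≤ n) : (⋃ t, Epart n t) = (cycleGraph n).edgeSet := by
  ext x
  simp only [Set.mem_iUnion, mem_edgeSet_iff hn]
  constructor
  · rintro ⟨t, i, rfl, -⟩; exact ⟨i, rfl⟩
  · rintro ⟨i, rfl⟩
    have h2 : i.val % 2 = 0 ∨ i.val % 2 = 1 := by omega
    rcases h2 with h2 | h2
    · by_cases hb : i.val + 2 < n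
      · exact ⟨0, i, rfl, by simp [cond, Nat.even_iff, h2, hb]⟩
      · exact ⟨2, i, rfl, by simp [cond, Nat.even_iff, h2]; omega⟩
    · exact ⟨1, i, rfl, by simp [cond, Nat.odd_iff, h2]⟩

lemma below_zero (E : Fin 3 → Set (Sym2 (Fin n))) :
    (⋃ j : Fin 3, ⋃ (_ : j < (0 : Fin 3)), E j) = ∅ := by
  simp [Fin.not_lt_zero]

lemma below_one (E : Fin 3 → Set (Sym2 (Fin n))) :
    (⋃ j : Fin 3, ⋃ (_ : j < (1 : Fin 3)), E j) = E 0 := by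
  ext x
  simp only [Set.mem_iUnion]
  constructor
  · rintro ⟨j, hj, hx⟩
    have : j = 0 := by omega
    rwa [this] at hx
  · intro hx; exact ⟨0, by decide, hx⟩

lemma below_two (E : Fin 3 → Set (Sym2 (Fin n))) :
    (⋃ j : Fin 3, ⋃ (_ : j < (2 : Fin 3)), E j) = E 0 ∪ E 1 := by
  ext x
  simp only [Set.mem_iUnion, Set.mem_union]
  constructor
  · rintro ⟨j, hj, hx⟩
    have : j = 0 ∨ j = 1 := by omega
    rcases this with rfl | rfl
    · exact Or.inl hx
    · exact Or.inr hx
  · rintro (hx | hx)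
    · exact ⟨0, by decide, hx⟩
    · exact ⟨1, by decide, hx⟩

lemma below_zero' {p : ℕ} (E : Fin p → Set (Sym2 (Fin n))) (z : Fin p) (hz : z.val = 0) :
    (⋃ j : Fin p, ⋃ (_ : j < z), E j) = ∅ := by
  simp only [Set.iUnion_eq_empty]
  intro j hj
  exact absurd hj (by rw [Fin.lt_def, hz]; omega)

/-- reduce the positivity check to edges of the form `(i, i+1)` -/
lemma pos_of_succ (hn : 3 ≤ n) (D M : Set (Sym2 (Fin n))) (w : Fin n → ℝ)
    (key : ∀ i : Fin n, ec n i ∉ D → (0 < w i + w (i + 1) ↔ ec n i ∈ M)) :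
    ∀ u v : Fin n, ((cycleGraph n).deleteEdges D).Adj u v →
      (0 < w u + w v ↔ s(u, v) ∈ M) := by
  intro u v huv
  rw [deleteEdges_adj] at huv
  obtain ⟨hadj, hdel⟩ := huv
  rcases (adj_iff hn).1 hadj with rfl | rfl
  · exact key u hdel
  · rw [Sym2.eq_swap] at hdel ⊢
    rw [add_comm]
    exact key v hdel

/-- weight function for part 0 -/
noncomputable def w0 (n : ℕ) (v : Fin n) : ℝ :=
  if v.val + 1 = n ∨ (v.val + 2 = n ∧ Even v.val) then -(2 * (n : ℝ))
  else if Even v.val then -(v.val : ℝ) / 2 else ((v.val : ℝ) + 1) / 2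

lemma w0_key (hn : 3 ≤ n) (i : Fin n) :
    0 < w0 n i + w0 n (i + 1) ↔ (Even i.val ∧ i.val + 2 < n) := by
  have hk : i.val < n := i.isLt
  have h1 := add_one_val hn i
  have hnn : (3 : ℝ) ≤ (n : ℝ) := by exact_mod_cast hn
  have hkr : (i.val : ℝ) < (n : ℝ) := by exact_mod_cast hk
  rcases eq_or_ne (i.val + 1) n with hw | hw
  · have hv : (i + 1).val = 0 := by rw [h1, if_pos hw]
    simp only [w0, hv]
    split_ifs <;>
      simp only [Nat.even_iff] at * <;>
      (constructor <;> intro hh <;>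
        first
          | omega
          | (exfalso; omega)
          | (exfalso; push_cast at hh; linarith)
          | (push_cast; linarith))
  · have hv : (i + 1).val = i.val + 1 := by rw [h1, if_neg hw]
    simp only [w0, hv]
    split_ifs <;>
      simp only [Nat.even_iff] at * <;>
      (constructor <;> intro hh <;>
        first
          | omega
          | (exfalso; omega)
          | (exfalso; push_cast at hh; linarith)
          | (push_cast; linarith))

/-- weight function for part 1 -/
noncomputable def w1 (n : ℕ) (v : Fin n) : ℝ :=
  if v.val = 0 then (if Even n then 2 else -1)
  else if v.val + 1 = n ∧ Even n then -1 else 1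

lemma w1_key (hn : 3 ≤ n) (i : Fin n) (hdel : ¬(Even i.val ∧ i.val + 2 < n)) :
    0 < w1 n i + w1 n (i + 1) ↔ Odd i.val := by
  have hk : i.val < n := i.isLt
  have h1 := add_one_val hn i
  rcases eq_or_ne (i.val + 1) n with hw | hw
  · have hv : (i + 1).val = 0 := by rw [h1, if_pos hw]
    simp only [w1, hv]
    split_ifs <;>
      simp only [Nat.even_iff, Nat.odd_iff] at * <;>
      (constructor <;> intro hh <;>
        first
          | omega
          | (exfalso; omega)
          | (exfalso; push_cast at hh; linarith)
          | norm_num)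
  · have hv : (i + 1).val = i.val + 1 := by rw [h1, if_neg hw]
    simp only [w1, hv]
    split_ifs <;>
      simp only [Nat.even_iff, Nat.odd_iff] at * <;>
      (constructor <;> intro hh <;>
        first
          | omega
          | (exfalso; omega)
          | (exfalso; push_cast at hh; linarith)
          | norm_num)

lemma w2_key (i : Fin n)
    (hdel0 : ¬(Even i.val ∧ i.val + 2 < n)) (hdel1 : ¬ Odd i.val) :
    Even i.val ∧ n ≤ i.val + 2 := by
  simp only [Nat.even_iff, Nat.odd_iff] at *
  omega

lemma cond0_iff {k : ℕ} : cond n 0 k ↔ (Even k ∧ k + 2 < n) := by simp [cond]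
lemma cond1_iff {k : ℕ} : cond n 1 k ↔ Odd k := by simp [cond]
lemma cond2_iff {k : ℕ} : cond n 2 k ↔ (Even k ∧ n ≤ k + 2) := by simp [cond]

lemma Epart_sub (hn : 3 ≤ n) (t : Fin 3) : Epart n t ⊆ (cycleGraph n).edgeSet := by
  rintro x ⟨i, rfl, -⟩
  exact adj_succ hn i

lemma part0 (hn : 3 ≤ n) :
    IsPositiveMatching
      ((cycleGraph n).deleteEdges (⋃ j : Fin 3, ⋃ (_ : j < (0 : Fin 3)), Epart n j))
      (Epart n 0) := by
  rw [below_zero]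
  refine ⟨?_, Epart_matching hn 0, w0 n, pos_of_succ hn ∅ _ _ ?_⟩
  · intro x hx
    rw [edgeSet_deleteEdges]
    exact ⟨Epart_sub hn 0 hx, Set.notMem_empty x⟩
  · intro i _
    rw [mem_Epart hn, show ((0 : Fin 3)).val = 0 from rfl, cond0_iff]
    exact w0_key hn i

lemma part1 (hn : 3 ≤ n) :
    IsPositiveMatching
      ((cycleGraph n).deleteEdges (⋃ j : Fin 3, ⋃ (_ : j < (1 : Fin 3)), Epart n j))
      (Epart n 1) := by
  rw [below_one]
  refine ⟨?_, Epart_matching hn 1, w1 n, pos_of_succ hn (Epart n 0) _ _ ?_⟩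
  · intro x hx
    rw [edgeSet_deleteEdges]
    exact ⟨Epart_sub hn 1 hx, fun h => (Epart_disjoint hn 1 0 (by decide)).ne_of_mem hx h rfl⟩
  · intro i hdel
    rw [mem_Epart hn, show ((1 : Fin 3)).val = 1 from rfl, cond1_iff]
    rw [mem_Epart hn, show ((0 : Fin 3)).val = 0 from rfl, cond0_iff] at hdel
    exact w1_key hn i hdel

lemma part2 (hn : 3 ≤ n) :
    IsPositiveMatching
      ((cycleGraph n).deleteEdges (⋃ j : Fin 3, ⋃ (_ : j < (2 : Fin 3)), Epart n j))
      (Epart n 2) := by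
  rw [below_two]
  refine ⟨?_, Epart_matching hn 2, fun _ => 1, pos_of_succ hn _ _ _ ?_⟩
  · intro x hx
    rw [edgeSet_deleteEdges]
    refine ⟨Epart_sub hn 2 hx, ?_⟩
    rintro (h | h)
    · exact (Epart_disjoint hn 2 0 (by decide)).ne_of_mem hx h rfl
    · exact (Epart_disjoint hn 2 1 (by decide)).ne_of_mem hx h rfl
  · intro i hdel
    rw [Set.mem_union] at hdel
    push_neg at hdel
    obtain ⟨h0, h1⟩ := hdel
    rw [mem_Epart hn, show ((0 : Fin 3)).val = 0 from rfl, cond0_iff] at h0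
    rw [mem_Epart hn, show ((1 : Fin 3)).val = 1 from rfl, cond1_iff] at h1
    rw [mem_Epart hn, show ((2 : Fin 3)).val = 2 from rfl, cond2_iff]
    constructor
    · intro _; exact w2_key i h0 h1
    · intro _; norm_num

lemma Epart_isPMD (hn : 3 ≤ n) : IsPMD (cycleGraph n) (Epart n) := by
  refine ⟨Epart_disjoint hn, Epart_union hn, ?_⟩
  intro t
  have h3 : t = 0 ∨ t = 1 ∨ t = 2 := by omega
  rcases h3 with rfl | rfl | rfl
  · exact part0 hn
  · exact part1 hn
  · exact part2 hn

lemma one_ne_zero' (hn : 3 ≤ n) : (1 : Fin n) ≠ 0 := by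
  intro h
  have := congrArg Fin.val h
  rw [val_one hn] at this
  simp at this

lemma succ_ne_self (hn : 3 ≤ n) (i : Fin n) : i ≠ i + 1 := by
  intro h
  have : (1 : Fin n) = 0 := by
    have := congrArg (· - i) h
    simpa [add_comm, add_sub_cancel_right, sub_self] using this.symm
  exact one_ne_zero' hn this

lemma ec_ne_succ (hn : 3 ≤ n) (i : Fin n) : ec n i ≠ ec n (i + 1) := by
  intro h
  exact succ_ne_self hn i (ec_inj hn h)

/-- two consecutive cycle edges cannot lie in a common matching -/
lemma not_both {M : Set (Sym2 (Fin n))} (hn : 3 ≤ n)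
    (hm : ∀ e ∈ M, ∀ f ∈ M, e ≠ f → ∀ v : Fin n, v ∈ e → v ∉ f)
    (i : Fin n) (h1 : ec n i ∈ M) (h2 : ec n (i + 1) ∈ M) : False := by
  refine hm _ h1 _ h2 (ec_ne_succ hn i) (i + 1) ?_ ?_
  · exact (mem_ec_iff hn).2 (Or.inr rfl)
  · exact (mem_ec_iff hn).2 (Or.inl rfl)

lemma no_zero (hn : 3 ≤ n) (E : Fin 0 → Set (Sym2 (Fin n)))
    (h : IsPMD (cycleGraph n) E) : False := by
  obtain ⟨-, hunion, -⟩ := h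
  have h0 : ec n 0 ∈ (cycleGraph n).edgeSet := adj_succ hn 0
  rw [← hunion] at h0
  simpa using h0

lemma no_one (hn : 3 ≤ n) (E : Fin 1 → Set (Sym2 (Fin n)))
    (h : IsPMD (cycleGraph n) E) : False := by
  obtain ⟨-, hunion, hpos⟩ := h
  have hall : ∀ i : Fin n, ec n i ∈ E 0 := by
    intro i
    have h0 : ec n i ∈ ⋃ t, E t := by rw [hunion]; exact adj_succ hn i
    rw [Set.mem_iUnion] at h0
    obtain ⟨t, ht⟩ := h0
    rwa [Subsingleton.elim t 0] at ht
  exact not_both hn (hpos 0).2.1 0 (hall 0) (hall (0 + 1))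

lemma no_two (hn : 3 ≤ n) (E : Fin 2 → Set (Sym2 (Fin n)))
    (h : IsPMD (cycleGraph n) E) : False := by
  classical
  obtain ⟨hdisj, hunion, hpos⟩ := h
  have hcover : ∀ i : Fin n, ec n i ∉ E 0 → ec n i ∈ E 1 := by
    intro i hi
    have h0 : ec n i ∈ ⋃ t, E t := by rw [hunion]; exact adj_succ hn i
    rw [Set.mem_iUnion] at h0
    obtain ⟨t, ht⟩ := h0
    have h3 : t = 0 ∨ t = 1 := by omega
    rcases h3 with rfl | rfl
    · exact absurd ht hi
    · exact ht
  have hm0 := (hpos 0).2.1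
  have hm1 := (hpos 1).2.1
  have alt : ∀ i : Fin n, ec n i ∈ E 0 ↔ ec n (i + 1) ∉ E 0 := by
    intro i
    constructor
    · intro h1 h2
      exact not_both hn hm0 i h1 h2
    · intro h1
      by_contra h2
      exact not_both hn hm1 i (hcover i h2) (hcover (i + 1) h1)
  obtain ⟨w, hw⟩ := (hpos 0).2.2
  have hzero : (⋃ j : Fin 2, ⋃ (_ : j < (0 : Fin 2)), E j) = ∅ := below_zero' E 0 rfl
  rw [hzero, deleteEdges_empty] at hw
  have hw' : ∀ i : Fin n, 0 < w i + w (i + 1) ↔ ec n i ∈ E 0 := fun i =>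
    hw i (i + 1) (adj_succ hn i)
  let A : Finset (Fin n) := Finset.univ.filter (fun i => ec n i ∈ E 0)
  have hA : ∀ i : Fin n, i ∈ A ↔ ec n i ∈ E 0 := by
    intro i; simp [A]
  have himg : A.image (· + 1) = Aᶜ := by
    ext j
    simp only [Finset.mem_image, Finset.mem_compl]
    constructor
    · rintro ⟨i, hi, rfl⟩
      rw [hA]
      exact (alt i).1 ((hA i).1 hi)
    · intro hj
      refine ⟨j - 1, ?_, sub_add_cancel j 1⟩
      rw [hA]
      have halt := (alt (j - 1))
      rw [sub_add_cancel] at halt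
      rw [hA] at hj
      exact halt.2 (by simpa using hj)
  have himg' : Aᶜ.image (· + 1) = A := by
    ext j
    simp only [Finset.mem_image, Finset.mem_compl]
    constructor
    · rintro ⟨i, hi, rfl⟩
      rw [hA]
      by_contra h2
      exact hi ((hA i).2 ((alt i).2 (fun hc => h2 hc)))
    · intro hj
      refine ⟨j - 1, ?_, sub_add_cancel j 1⟩
      rw [hA]
      intro hc
      have halt := (alt (j - 1)).1 hc
      rw [sub_add_cancel] at halt
      exact halt ((hA j).1 hj)
  have hinj : ∀ x ∈ A, ∀ y ∈ A, x + 1 = y + 1 → x = y := fun x _ y _ h => add_right_cancel h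
  have hinj' : ∀ x ∈ Aᶜ, ∀ y ∈ Aᶜ, x + 1 = y + 1 → x = y := fun x _ y _ h => add_right_cancel h
  have hs1 : ∑ i ∈ A, w (i + 1) = ∑ j ∈ Aᶜ, w j := by
    rw [← Finset.sum_image hinj, himg]
  have hs2 : ∑ i ∈ Aᶜ, w (i + 1) = ∑ j ∈ A, w j := by
    rw [← Finset.sum_image hinj', himg']
  have hS0 : ∑ i ∈ A, (w i + w (i + 1)) = ∑ i : Fin n, w i := by
    rw [Finset.sum_add_distrib, hs1, Finset.sum_add_sum_compl]
  have hS1 : ∑ i ∈ Aᶜ, (w i + w (i + 1)) = ∑ i : Fin n, w i := by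
    rw [Finset.sum_add_distrib, hs2, add_comm, Finset.sum_add_sum_compl]
  have hAne : A.Nonempty := by
    by_cases h0 : (0 : Fin n) ∈ A
    · exact ⟨0, h0⟩
    · refine ⟨1, ?_⟩
      rw [hA]
      rw [hA] at h0
      by_contra h2
      have := (alt 0).2 (by simpa using h2)
      exact h0 this
  have hpos0 : 0 < ∑ i ∈ A, (w i + w (i + 1)) := by
    apply Finset.sum_pos _ hAne
    intro i hi
    exact (hw' i).2 ((hA i).1 hi)
  have hneg1 : ∑ i ∈ Aᶜ, (w i + w (i + 1)) ≤ 0 := by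
    apply Finset.sum_nonpos
    intro i hi
    rw [Finset.mem_compl, hA] at hi
    by_contra h2
    exact hi ((hw' i).1 (by linarith))
  rw [hS0] at hpos0
  rw [hS1] at hneg1
  linarith

end PmdCycleAux

/-- Every cycle graph `Cₙ` with `n ≥ 3` satisfies `pmd(Cₙ) = 3`. -/
theorem pmd_cycleGraph (n : ℕ) (hn : 3 ≤ n) : pmd (cycleGraph n) = 3 := by
  haveI : NeZero n := ⟨by omega⟩
  have h3 : 3 ∈ {p : ℕ | ∃ E : Fin p → Set (Sym2 (Fin n)), IsPMD (cycleGraph n) E} :=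
    ⟨PmdCycleAux.Epart n, PmdCycleAux.Epart_isPMD hn⟩
  refine le_antisymm (Nat.sInf_le h3) ?_
  refine le_csInf ⟨3, h3⟩ ?_
  rintro p ⟨E, hE⟩
  by_contra hlt
  push_neg at hlt
  interval_cases p
  · exact PmdCycleAux.no_zero hn E hE
  · exact PmdCycleAux.no_one hn E hE
  · exact PmdCycleAux.no_two hn E hE
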